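/- Let p, q ∈ [1,∞] satisfy 1/p + 1/q = 1, let μ be a σ-finite measure on a measurable space α, let n ≥ 1, and let f_1,…,f_n, g_1,…,g_n be elements of the Banach spaces L^p(μ) and L^q(μ), respectively. Then for all continuous linear functionals φ on L^p(μ) and ψ on L^q(μ) with ‖φ‖ ≤ 1 and ‖ψ‖ ≤ 1, one has ∑_{i=1}^n φ(f_i)·ψ(g_i) ≤ ‖x ↦ ‖y ↦ ∑_{i=1}^n f_i(x)·g_i(y)‖_{L^q_y(μ)}‖_{L^p_x(μ)}; that is, the injective tensor norm of ∑ f_i ⊗ g_i is dominated by the iterated L^p(L^q) norm of the pointwise dot product (x,y) ↦ ∑ f_i(x)·g_i(y). -/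
import Mathlib


open MeasureTheory ENNReal


private lemma lp_coeFn_sum {α E : Type*} [MeasurableSpace α] {μ : MeasureTheory.Measure α}
    [NormedAddCommGroup E] {p : ENNReal} {ι : Type*} (s : Finset ι)
    (h : ι → MeasureTheory.Lp E p μ) :
    (⇑(∑ i ∈ s, h i) : α → E) =ᵐ[μ] fun x => ∑ i ∈ s, (h i : α → E) x := by
  classical
  induction s using Finset.induction_on with
  | empty =>
    simp only [Finset.sum_empty]
    exact (MeasureTheory.Lp.coeFn_zero E p μ).trans (Filter.EventuallyEq.refl _ _)
  | @insert a t hnotmem ih =>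
    rw [Finset.sum_insert hnotmem]
    filter_upwards [MeasureTheory.Lp.coeFn_add (h a) (∑ i ∈ t, h i), ih] with x hx hx2
    rw [hx, Pi.add_apply, hx2, Finset.sum_insert hnotmem]

/-- **Injective tensor norm dominated by the iterated `L^p(L^q)` norm of the dot product.**
For conjugate exponents and `f i ∈ L^p(μ)`, `g i ∈ L^q(μ)`, and unit functionals `φ, ψ`,
one has `∑ φ(f i) ψ(g i) ≤ ‖x ↦ ‖y ↦ ∑ f i x * g i y‖_{L^q}‖_{L^p}`. -/
theorem stmt4 {α : Type*} [MeasurableSpace α] (μ : Measure α) [SigmaFinite μ]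
    (p q : ℝ≥0∞) [Fact (1 ≤ p)] [Fact (1 ≤ q)] (hpq : 1 / p + 1 / q = 1)
    (n : ℕ) (hn : 1 ≤ n) (f : Fin n → Lp ℝ p μ) (g : Fin n → Lp ℝ q μ)
    (φ : Lp ℝ p μ →L[ℝ] ℝ) (ψ : Lp ℝ q μ →L[ℝ] ℝ) (hφ : ‖φ‖ ≤ 1) (hψ : ‖ψ‖ ≤ 1) :
    ENNReal.ofReal (∑ i, φ (f i) * ψ (g i)) ≤
      eLpNorm (fun x =>
        (eLpNorm (fun y => ∑ i, (f i : α → ℝ) x * (g i : α → ℝ) y) q μ).toReal) p μ := by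
  set F : Lp ℝ p μ := ∑ i, ψ (g i) • f i with hF
  have hsum : ∑ i, φ (f i) * ψ (g i) = φ F := by
    simp [hF, map_sum, mul_comm]
  -- pointwise function G x ∈ Lp ℝ q μ
  set G : α → Lp ℝ q μ := fun x => ∑ i, ((f i : α → ℝ) x) • g i with hG
  -- For every x, the inner eLpNorm equals ‖G x‖ (as ENNReal)
  have hGnorm : ∀ x, eLpNorm (fun y => ∑ i, (f i : α → ℝ) x * (g i : α → ℝ) y) q μ
      = eLpNorm (G x) q μ := by
    intro x
    refine eLpNorm_congr_ae ?_
    have h1 : (⇑(G x) : α → ℝ) =ᵐ[μ] fun y => ∑ i, (f i : α → ℝ) x * (g i : α → ℝ) y := by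
      have := lp_coeFn_sum Finset.univ (fun i => ((f i : α → ℝ) x) • g i)
      refine this.trans ?_
      have : ∀ i : Fin n, (⇑(((f i : α → ℝ) x) • g i) : α → ℝ)
          =ᵐ[μ] fun y => (f i : α → ℝ) x * (g i : α → ℝ) y := fun i =>
        (Lp.coeFn_smul ((f i : α → ℝ) x) (g i)).mono (fun y hy => by
          simp only [hy]; simp [smul_eq_mul])
      filter_upwards [eventually_countable_forall.2 this] with y hy
      exact Finset.sum_congr rfl fun i _ => hy i
    exact h1.symm
  -- coeFn of F
  have hFfn : (⇑F : α → ℝ) =ᵐ[μ] fun x => ψ (G x) := by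
    have h1 := lp_coeFn_sum Finset.univ (fun i => ψ (g i) • f i)
    have h2 : ∀ i : Fin n, (⇑(ψ (g i) • f i) : α → ℝ)
        =ᵐ[μ] fun x => ψ (g i) * (f i : α → ℝ) x := fun i =>
      (Lp.coeFn_smul (ψ (g i)) (f i)).mono (fun x hx => by
        simp only [hx]; simp [smul_eq_mul])
    filter_upwards [h1, eventually_countable_forall.2 h2] with x hx hx2
    rw [hx]
    rw [Finset.sum_congr rfl fun i _ => hx2 i]
    simp [hG, map_sum, _root_.map_smul, smul_eq_mul, mul_comm]
  -- bound eLpNorm of F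
  have hbound : eLpNorm (⇑F) p μ ≤
      eLpNorm (fun x =>
        (eLpNorm (fun y => ∑ i, (f i : α → ℝ) x * (g i : α → ℝ) y) q μ).toReal) p μ := by
    refine eLpNorm_mono_ae ?_
    filter_upwards [hFfn] with x hx
    rw [hx]
    calc ‖ψ (G x)‖ ≤ ‖ψ‖ * ‖G x‖ := ψ.le_opNorm _
      _ ≤ 1 * ‖G x‖ := by gcongr
      _ = (eLpNorm (fun y => ∑ i, (f i : α → ℝ) x * (g i : α → ℝ) y) q μ).toReal := by
          rw [one_mul, Lp.norm_def, hGnorm x]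
      _ ≤ ‖(eLpNorm (fun y => ∑ i, (f i : α → ℝ) x * (g i : α → ℝ) y) q μ).toReal‖ :=
          le_abs_self _
  calc ENNReal.ofReal (∑ i, φ (f i) * ψ (g i)) = ENNReal.ofReal (φ F) := by rw [hsum]
    _ ≤ ENNReal.ofReal ‖F‖ := by
        apply ENNReal.ofReal_le_ofReal
        calc φ F ≤ ‖φ F‖ := le_abs_self _
          _ ≤ ‖φ‖ * ‖F‖ := φ.le_opNorm _
          _ ≤ 1 * ‖F‖ := by gcongr
          _ = ‖F‖ := one_mul _
    _ = ENNReal.ofReal (eLpNorm (⇑F) p μ).toReal := by rw [Lp.norm_def]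
    _ ≤ eLpNorm (⇑F) p μ := ENNReal.ofReal_toReal_le
    _ ≤ _ := hbound
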